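/- For Im ζ ≠ 0, the integral (1/√(2π)) ∫_ℝ e^{-v²/2}/(v-ζ) dv equals i√(π/2) e^{-ζ²/2} [sign(Im ζ) − erf(−iζ/√2)]. -/

import Mathlib

open MeasureTheory Real Set
open scoped Real

/-- The complex error function `erf(ζ) = (2/√π) ∫_0^ζ e^{-t²} dt` along the straight
path from `0` to `ζ` (path-independent since the integrand is entire). -/
noncomputable def cerf (ζ : ℂ) : ℂ :=
  (2 / Real.sqrt Real.pi : ℂ) * ζ * ∫ t in (0:ℝ)..1, Complex.exp (-((t : ℂ) * ζ) ^ 2)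

lemma cerf_neg (w : ℂ) : cerf (-w) = -cerf w := by
  simp [cerf, mul_neg, neg_sq, neg_mul]

lemma cerf_zero : cerf 0 = 0 := by simp [cerf]

lemma hasDerivAt_inner (w a : ℂ) :
    HasDerivAt (fun x : ℂ => x * Complex.exp (-(a * x) ^ 2))
      ((1 - 2 * a^2 * w^2) * Complex.exp (-(a * w) ^ 2)) w := by
  have h1 : HasDerivAt (fun x : ℂ => -(a * x) ^ 2) (-(2 * a^2 * w)) w := by
    have := (((hasDerivAt_id w).const_mul a).pow 2).neg
    refine this.congr_deriv ?_
    simp only [id]; ring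
  have h2 := h1.cexp
  have h3 := (hasDerivAt_id w).mul h2
  refine h3.congr_deriv ?_
  simp only [id]; ring

lemma cerf_hasDerivAt (w : ℂ) :
    HasDerivAt cerf ((2 / Real.sqrt Real.pi : ℂ) * Complex.exp (-w ^ 2)) w := by
  set M : ℝ := ‖w‖ + 1 with hM
  have hM1 : 0 < M := by positivity
  -- derivative of the parametrized integral
  have key : HasDerivAt (fun x : ℂ => ∫ t in (0:ℝ)..1, x * Complex.exp (-((t : ℂ) * x) ^ 2))
      (∫ t in (0:ℝ)..1, (1 - 2 * (t:ℂ)^2 * w^2) * Complex.exp (-((t : ℂ) * w) ^ 2)) w := by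
    have cont : ∀ x : ℂ, Continuous (fun t : ℝ => x * Complex.exp (-((t : ℂ) * x) ^ 2)) := by
      intro x; fun_prop
    have := (intervalIntegral.hasDerivAt_integral_of_dominated_loc_of_deriv_le
      (F := fun (x : ℂ) (t : ℝ) => x * Complex.exp (-((t : ℂ) * x) ^ 2))
      (F' := fun (x : ℂ) (t : ℝ) => (1 - 2 * (t:ℂ)^2 * x^2) * Complex.exp (-((t : ℂ) * x) ^ 2))
      (x₀ := w) (a := (0:ℝ)) (b := 1) (μ := volume)
      (bound := fun _ => (1 + 2 * M^2) * Real.exp (M^2))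
      (Metric.ball_mem_nhds w one_pos)
      (Filter.Eventually.of_forall fun x => ((cont x).aestronglyMeasurable))
      (((cont w).intervalIntegrable _ _))
      ((by fun_prop : Continuous (fun t : ℝ => (1 - 2 * (t:ℂ)^2 * w^2) * Complex.exp (-((t : ℂ) * w) ^ 2))).aestronglyMeasurable)
      ?_ (intervalIntegrable_const) ?_)
    · exact this.2
    · refine Filter.Eventually.of_forall fun t ht x hx => ?_
      have htt : t ∈ Set.Ioc (0:ℝ) 1 := by
        simpa [Set.uIoc_of_le (by norm_num : (0:ℝ) ≤ 1)] using ht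
      have ht0 : 0 ≤ t := le_of_lt htt.1
      have ht1 : t ≤ 1 := htt.2
      have hxM : ‖x‖ ≤ M := by
        have := mem_ball_iff_norm.mp hx
        have h2 : ‖x‖ - ‖w‖ ≤ ‖x - w‖ := norm_sub_norm_le x w
        simp only [hM]; linarith
      have habs : ‖(t:ℂ) * x‖ ≤ M := by
        rw [norm_mul, Complex.norm_real]
        calc ‖t‖ * ‖x‖ ≤ 1 * M := by
              apply mul_le_mul _ hxM (norm_nonneg _) (by norm_num)
              rwa [Real.norm_of_nonneg ht0]
          _ = M := one_mul M
      have h1 : ‖(1 : ℂ) - 2 * (t:ℂ)^2 * x^2‖ ≤ 1 + 2 * M^2 := by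
        refine (norm_sub_le _ _).trans ?_
        gcongr
        · norm_num
        · have e1 : ‖2 * (t:ℂ)^2 * x^2‖ = 2 * (‖(t:ℂ)*x‖^2) := by
            rw [show (2 * (t:ℂ)^2 * x^2) = 2 * ((t:ℂ)*x)^2 by ring, norm_mul, norm_pow]
            norm_num
          rw [e1]
          have : ‖(t:ℂ)*x‖^2 ≤ M^2 := by
            apply pow_le_pow_left₀ (norm_nonneg _) habs
          linarith
      have h2 : (-((t : ℂ) * x) ^ 2).re ≤ M^2 := by
        calc (-((t : ℂ) * x) ^ 2).re ≤ ‖(-((t : ℂ) * x) ^ 2)‖ := Complex.re_le_norm _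
          _ = ‖(t:ℂ)*x‖^2 := by rw [norm_neg, norm_pow]
          _ ≤ M^2 := pow_le_pow_left₀ (norm_nonneg _) habs 2
      have hexp : ‖Complex.exp (-((t : ℂ) * x) ^ 2)‖ ≤ Real.exp (M^2) := by
        rw [Complex.norm_exp]
        exact Real.exp_le_exp.mpr h2
      simp only [norm_mul]
      exact mul_le_mul h1 hexp (norm_nonneg _) (by positivity)
    · exact Filter.Eventually.of_forall fun t ht x hx => hasDerivAt_inner x (t:ℂ)
  -- value of the derivative integral, by FTC
  have ftc : (∫ t in (0:ℝ)..1, (1 - 2 * (t:ℂ)^2 * w^2) * Complex.exp (-((t : ℂ) * w) ^ 2))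
      = Complex.exp (-w^2) := by
    have hd : ∀ t ∈ Set.uIcc (0:ℝ) 1,
        HasDerivAt (fun s : ℝ => (s:ℂ) * Complex.exp (-((s : ℂ) * w) ^ 2))
        ((1 - 2 * (t:ℂ)^2 * w^2) * Complex.exp (-((t : ℂ) * w) ^ 2)) t := by
      intro t _
      have h := (hasDerivAt_inner (t:ℂ) w).comp_ofReal
      have e : (fun s : ℝ => (s:ℂ) * Complex.exp (-((s : ℂ) * w) ^ 2))
          = (fun y : ℝ => (y:ℂ) * Complex.exp (-(w * (y:ℂ)) ^ 2)) := by
        funext s; rw [mul_comm (s:ℂ) w]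
      rw [e, show ((1 - 2 * (t:ℂ)^2 * w^2) * Complex.exp (-((t : ℂ) * w) ^ 2))
          = ((1 - 2 * w^2 * (t:ℂ)^2) * Complex.exp (-(w * (t:ℂ)) ^ 2)) by
        rw [mul_comm (w) ((t:ℂ))]; ring]
      exact h
    have hint : IntervalIntegrable
        (fun t : ℝ => (1 - 2 * (t:ℂ)^2 * w^2) * Complex.exp (-((t : ℂ) * w) ^ 2)) volume 0 1 :=
      (by fun_prop : Continuous
        (fun t : ℝ => (1 - 2 * (t:ℂ)^2 * w^2) * Complex.exp (-((t : ℂ) * w) ^ 2))).intervalIntegrable _ _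
    rw [intervalIntegral.integral_eq_sub_of_hasDerivAt hd hint]
    norm_num
  rw [ftc] at key
  have hcerf : cerf = fun x : ℂ =>
      (2 / Real.sqrt Real.pi : ℂ) * ∫ t in (0:ℝ)..1, x * Complex.exp (-((t : ℂ) * x) ^ 2) := by
    funext x
    rw [cerf, intervalIntegral.integral_const_mul, mul_assoc]
  rw [hcerf]
  exact key.const_mul _

lemma integrableOn_gauss_shift (b c : ℝ) :
    IntegrableOn (fun t : ℝ => Real.exp (-t^2/2 + b*t + c)) (Ioi 0) := by
  have h : Integrable (fun t : ℝ => Real.exp (c + b^2/2) * Real.exp (-(1/2) * (t - b)^2)) :=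
    ((integrable_exp_neg_mul_sq (by norm_num : (0:ℝ) < 1/2)).comp_sub_right b).const_mul _
  have e : (fun t : ℝ => Real.exp (-t^2/2 + b*t + c))
      = fun t => Real.exp (c + b^2/2) * Real.exp (-(1/2)*(t-b)^2) := by
    funext t; rw [← Real.exp_add]; congr 1; ring
  rw [e]; exact h.integrableOn

lemma norm_gauss (ζ : ℂ) (t : ℝ) :
    ‖Complex.exp (-((t:ℂ) - Complex.I*ζ)^2/2)‖
      = Real.exp (-t^2/2 - ζ.im * t + (ζ.re^2 - ζ.im^2)/2) := by
  rw [Complex.norm_exp]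
  congr 1
  rw [show -((t:ℂ) - Complex.I*ζ)^2/2 = ((-1/2 : ℝ):ℂ) * ((t:ℂ) - Complex.I*ζ)^2 by
    push_cast; ring]
  rw [Complex.re_ofReal_mul, sq, Complex.mul_re]
  simp only [Complex.sub_re, Complex.sub_im, Complex.mul_re, Complex.mul_im, Complex.I_re,
    Complex.I_im, Complex.ofReal_re, Complex.ofReal_im]
  ring

lemma integrableOn_gfun (ζ : ℂ) :
    IntegrableOn (fun t : ℝ => Complex.exp (-((t:ℂ) - Complex.I*ζ)^2/2)) (Ioi 0) := by
  refine Integrable.mono' (integrableOn_gauss_shift (-ζ.im) ((ζ.re^2-ζ.im^2)/2))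
    ((by fun_prop : Continuous
      (fun t : ℝ => Complex.exp (-((t:ℂ) - Complex.I*ζ)^2/2))).aestronglyMeasurable) ?_
  filter_upwards with t
  rw [norm_gauss]
  apply le_of_eq; congr 1; ring

lemma integral_Ioi_cexp (a : ℂ) (ha : 0 < a.re) :
    ∫ t in Ioi (0:ℝ), Complex.exp (-(a * t)) = a⁻¹ := by
  have ha0 : a ≠ 0 := fun h => by simp [h] at ha
  have hnorm : ∀ t : ℝ, ‖Complex.exp (-(a * t))‖ = Real.exp (-a.re * t) := by
    intro t
    rw [Complex.norm_exp]
    congr 1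
    simp [Complex.mul_re]
  have hd : ∀ x ∈ Ici (0:ℝ),
      HasDerivAt (fun t : ℝ => -a⁻¹ * Complex.exp (-(a * t))) (Complex.exp (-(a * x))) x := by
    intro x _
    have h1 : HasDerivAt (fun z : ℂ => -(a*z)) (-a) (x:ℂ) := by
      have := ((hasDerivAt_id ((x:ℂ))).const_mul a).neg; rw [mul_one] at this; exact this
    have h2 := h1.cexp.const_mul (-a⁻¹)
    have h3 : -a⁻¹ * (Complex.exp (-(a * (x:ℂ))) * -a) = Complex.exp (-(a * (x:ℂ))) := by
      field_simp
    rw [h3] at h2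
    exact h2.comp_ofReal
  have hint : IntegrableOn (fun t : ℝ => Complex.exp (-(a*t))) (Ioi 0) := by
    refine Integrable.mono' (exp_neg_integrableOn_Ioi 0 ha)
      ((by fun_prop : Continuous (fun t : ℝ => Complex.exp (-(a*t)))).aestronglyMeasurable) ?_
    filter_upwards with t
    rw [hnorm t]
  have htend : Filter.Tendsto (fun t : ℝ => -a⁻¹ * Complex.exp (-(a * t)))
      Filter.atTop (nhds 0) := by
    have hexp : Filter.Tendsto (fun t : ℝ => -a.re * t) Filter.atTop Filter.atBot :=
      Filter.Tendsto.const_mul_atTop_of_neg (neg_lt_zero.mpr ha) Filter.tendsto_id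
    have h2 : Filter.Tendsto (fun t : ℝ => Real.exp (-a.re * t)) Filter.atTop (nhds 0) :=
      Real.tendsto_exp_atBot.comp hexp
    refine squeeze_zero_norm (fun t => ?_) (by simpa only [mul_zero] using (h2.const_mul ‖(a⁻¹:ℂ)‖))
    rw [norm_mul, norm_neg, hnorm]
  have := integral_Ioi_of_hasDerivAt_of_tendsto' hd hint htend
  rw [this]
  simp

noncomputable def gfun (ζ : ℂ) : ℂ :=
  ∫ t in Ioi (0:ℝ), Complex.exp (-((t:ℂ) - Complex.I*ζ)^2/2)

lemma gfun_hasDerivAt (ζ : ℂ) :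
    HasDerivAt gfun (Complex.I * Complex.exp (ζ^2/2)) ζ := by
  set M : ℝ := ‖ζ‖ + 1 with hM
  have hM0 : 0 < M := by positivity
  have hdz : ∀ (z : ℂ) (t : ℝ), HasDerivAt (fun x : ℂ => Complex.exp (-((t:ℂ) - Complex.I*x)^2/2))
      (Complex.exp (-((t:ℂ) - Complex.I*z)^2/2) * (Complex.I * ((t:ℂ) - Complex.I*z))) z := by
    intro z t
    have h1 : HasDerivAt (fun x : ℂ => -((t:ℂ) - Complex.I*x)^2/2)
        (Complex.I * ((t:ℂ) - Complex.I*z)) z := by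
      have := ((((hasDerivAt_id z).const_mul Complex.I).const_sub ((t:ℂ))).pow 2).neg.div_const 2
      refine this.congr_deriv ?_
      simp only [id]
      ring
    exact h1.cexp
  have key := hasDerivAt_integral_of_dominated_loc_of_deriv_le
    (F := fun (x : ℂ) (t : ℝ) => Complex.exp (-((t:ℂ) - Complex.I*x)^2/2))
    (F' := fun (x : ℂ) (t : ℝ) =>
      Complex.exp (-((t:ℂ) - Complex.I*x)^2/2) * (Complex.I * ((t:ℂ) - Complex.I*x)))
    (x₀ := ζ) (μ := volume.restrict (Ioi 0))
    (bound := fun t => (1 + M) * Real.exp (-t^2/2 + (M+1)*t + M^2/2))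
    (Metric.ball_mem_nhds ζ one_pos)
    (Filter.Eventually.of_forall fun x => (by fun_prop :
      Continuous (fun t : ℝ => Complex.exp (-((t:ℂ) - Complex.I*x)^2/2))).aestronglyMeasurable)
    (integrableOn_gfun ζ)
    ((by fun_prop : Continuous (fun t : ℝ =>
      Complex.exp (-((t:ℂ) - Complex.I*ζ)^2/2) * (Complex.I * ((t:ℂ) - Complex.I*ζ)))).aestronglyMeasurable)
    ?_ ((integrableOn_gauss_shift (M+1) (M^2/2)).const_mul _) ?_
  · -- now compute the value of the derivative integral
    have hval : (∫ t in Ioi (0:ℝ),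
        Complex.exp (-((t:ℂ) - Complex.I*ζ)^2/2) * (Complex.I * ((t:ℂ) - Complex.I*ζ)))
        = Complex.I * Complex.exp (ζ^2/2) := by
      have hd : ∀ x ∈ Ici (0:ℝ), HasDerivAt (fun t : ℝ => -Complex.I * Complex.exp (-((t:ℂ) - Complex.I*ζ)^2/2))
          (Complex.exp (-((x:ℂ) - Complex.I*ζ)^2/2) * (Complex.I * ((x:ℂ) - Complex.I*ζ))) x := by
        intro x _
        have h1 : HasDerivAt (fun z : ℂ => -(z - Complex.I*ζ)^2/2) (-((x:ℂ) - Complex.I*ζ)) (x:ℂ) := by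
          have := (((hasDerivAt_id ((x:ℂ))).sub_const (Complex.I*ζ)).pow 2).neg.div_const 2
          refine this.congr_deriv ?_
          simp only [id]
          ring
        have h2 := h1.cexp.const_mul (-Complex.I)
        have h3 := h2.comp_ofReal
        convert h3 using 1
        ring
      have htend : Filter.Tendsto (fun t : ℝ => -Complex.I * Complex.exp (-((t:ℂ) - Complex.I*ζ)^2/2))
          Filter.atTop (nhds 0) := by
        have hb : Filter.Tendsto (fun t : ℝ => -(t+ζ.im)^2/2 + (ζ.im^2/2 + (ζ.re^2 - ζ.im^2)/2))
            Filter.atTop Filter.atBot := by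
          have h1 : Filter.Tendsto (fun t : ℝ => t + ζ.im) Filter.atTop Filter.atTop :=
            Filter.tendsto_atTop_add_const_right _ _ Filter.tendsto_id
          have h2 : Filter.Tendsto (fun t : ℝ => (t+ζ.im)^2) Filter.atTop Filter.atTop := by
            simpa [sq] using h1.atTop_mul_atTop₀ h1
          have h3 : Filter.Tendsto (fun t : ℝ => -(t+ζ.im)^2/2) Filter.atTop Filter.atBot := by
            apply Filter.Tendsto.atBot_div_const (by norm_num : (0:ℝ) < 2)
            exact Filter.tendsto_neg_atBot_iff.mpr h2
          exact Filter.tendsto_atBot_add_const_right _ _ h3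
        have h4 := Real.tendsto_exp_atBot.comp hb
        refine squeeze_zero_norm (fun t => ?_) (by simpa using h4)
        rw [norm_mul, norm_neg, Complex.norm_I, one_mul, norm_gauss]
        apply le_of_eq
        congr 1
        ring
      have := integral_Ioi_of_hasDerivAt_of_tendsto' hd key.1 htend
      rw [this]
      have : ((0:ℂ) - Complex.I*ζ)^2 = -ζ^2 := by
        rw [zero_sub, neg_sq, mul_pow, Complex.I_sq]
        ring
      push_cast
      rw [this]
      ring_nf
    rw [hval] at key
    exact key.2
  · -- bound
    rw [ae_restrict_iff' measurableSet_Ioi]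
    refine Filter.Eventually.of_forall fun t ht x hx => ?_
    have ht0 : 0 < t := ht
    have hxM : ‖x‖ ≤ M := by
      have := mem_ball_iff_norm.mp hx
      have h2 : ‖x‖ - ‖ζ‖ ≤ ‖x - ζ‖ := norm_sub_norm_le x ζ
      simp only [hM]; linarith
    have him : |x.im| ≤ M := (Complex.abs_im_le_norm x).trans hxM
    have hre : |x.re| ≤ M := (Complex.abs_re_le_norm x).trans hxM
    rw [norm_mul, norm_gauss, norm_mul, Complex.norm_I, one_mul]
    have h1 : ‖(t:ℂ) - Complex.I*x‖ ≤ t + M := by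
      refine (norm_sub_le _ _).trans ?_
      rw [Complex.norm_real, norm_mul, Complex.norm_I, one_mul, Real.norm_of_nonneg ht0.le]
      gcongr
    have h2 : Real.exp (-t^2/2 - x.im * t + (x.re^2 - x.im^2)/2)
        ≤ Real.exp (-t^2/2 + M*t + M^2/2) := by
      apply Real.exp_le_exp.mpr
      have e1 : -x.im * t ≤ M * t := by
        apply mul_le_mul_of_nonneg_right _ ht0.le
        cases abs_le.mp him; linarith
      have e2 : x.re^2 - x.im^2 ≤ M^2 := by
        have : x.re^2 ≤ M^2 := sq_le_sq' (by cases abs_le.mp hre; linarith) (abs_le.mp hre).2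
        nlinarith [sq_nonneg x.im]
      nlinarith [e1, e2]
    have h3 : t + M ≤ (1 + M) * Real.exp t := by
      have e1 : t + 1 ≤ Real.exp t := by
        have := Real.add_one_le_exp t
        linarith
      have e2 : (1:ℝ) ≤ Real.exp t := Real.one_le_exp ht0.le
      nlinarith [Real.exp_pos t]
    calc Real.exp (-t^2/2 - x.im * t + (x.re^2 - x.im^2)/2) * ‖(t:ℂ) - Complex.I*x‖
        ≤ Real.exp (-t^2/2 + M*t + M^2/2) * ((1 + M) * Real.exp t) := by
          apply mul_le_mul h2 (h1.trans h3) (norm_nonneg _) (by positivity)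
      _ = (1 + M) * Real.exp (-t^2/2 + (M+1)*t + M^2/2) := by
          rw [show Real.exp (-t^2/2 + M*t + M^2/2) * ((1 + M) * Real.exp t)
              = (1 + M) * (Real.exp (-t^2/2 + M*t + M^2/2) * Real.exp t) by ring,
            ← Real.exp_add]
          ring_nf
  · -- differentiability
    exact Filter.Eventually.of_forall fun t x _ => hdz x t

lemma sqrt_pi_ne : Real.sqrt Real.pi ≠ 0 := by positivity
lemma sqrt_two_ne : Real.sqrt 2 ≠ 0 := by positivity

lemma sqrt_halfpi : Real.sqrt (Real.pi/2) = Real.sqrt Real.pi / Real.sqrt 2 := by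
  rw [Real.sqrt_div (le_of_lt Real.pi_pos)]

lemma gfun_zero : gfun 0 = (Real.sqrt (Real.pi/2) : ℂ) := by
  rw [gfun]
  have h := integral_gaussian_complex_Ioi (b := (1/2 : ℂ)) (by norm_num)
  have e : (fun t : ℝ => Complex.exp (-((t:ℂ) - Complex.I*0)^2/2))
      = fun t : ℝ => Complex.exp (-(1/2:ℂ) * (t:ℂ)^2) := by
    funext t; congr 1; ring
  rw [e, h]
  have e2 : ((Real.pi : ℂ) / (1/2)) = (((2*Real.pi : ℝ)) : ℂ) := by push_cast; ring
  rw [e2]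
  rw [show ((1:ℂ)/2) = (((1/2 : ℝ)):ℂ) by norm_num, ← Complex.ofReal_cpow (by positivity)]
  rw [← Real.sqrt_eq_rpow]
  rw [show Real.sqrt (2*Real.pi) = 2 * Real.sqrt (Real.pi/2) by
    rw [show 2*Real.pi = 2^2 * (Real.pi/2) by ring, Real.sqrt_mul (by positivity),
      Real.sqrt_sq (by norm_num)]]
  push_cast
  ring

lemma hfun_hasDerivAt (ζ : ℂ) :
    HasDerivAt (fun z : ℂ => (Real.sqrt (Real.pi/2) : ℂ) *
        (1 - cerf (-Complex.I * z / (Real.sqrt 2 : ℂ))))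
      (Complex.I * Complex.exp (ζ^2/2)) ζ := by
  have h1 : HasDerivAt (fun z : ℂ => -Complex.I * z / (Real.sqrt 2 : ℂ))
      (-Complex.I / (Real.sqrt 2 : ℂ)) ζ := by
    simpa using ((hasDerivAt_id ζ).const_mul (-Complex.I)).div_const ((Real.sqrt 2 : ℂ))
  have h2 := (cerf_hasDerivAt (-Complex.I * ζ / (Real.sqrt 2 : ℂ))).comp ζ h1
  have h3 := ((h2.const_mul ((-1 : ℂ))).const_add 1).const_mul ((Real.sqrt (Real.pi/2) : ℂ))
  have hs2sq : ((Real.sqrt 2 : ℂ))^2 = (2:ℂ) := by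
    rw [← Complex.ofReal_pow, Real.sq_sqrt (by norm_num)]; norm_num
  refine (h3.congr_of_eventuallyEq ?_).congr_deriv ?_
  · exact Filter.Eventually.of_forall fun z => by simp only [Function.comp]; ring_nf
  · symm
    have e1 : (-Complex.I * ζ / (Real.sqrt 2 : ℂ))^2 = -ζ^2/2 := by
      rw [show (-Complex.I * ζ / (Real.sqrt 2 : ℂ))^2
          = Complex.I^2 * ζ^2/((Real.sqrt 2 : ℂ))^2 by ring, Complex.I_sq, hs2sq]
      ring
    rw [e1]
    rw [show -(-ζ^2/2 : ℂ) = ζ^2/2 by ring]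
    rw [show (Real.sqrt (Real.pi/2) : ℂ) = (Real.sqrt Real.pi : ℂ) / (Real.sqrt 2 : ℂ) by
      rw [← Complex.ofReal_div, sqrt_halfpi]]
    have hπ : ((Real.sqrt Real.pi : ℂ)) ≠ 0 := by
      simpa using sqrt_pi_ne
    have h2' : ((Real.sqrt 2 : ℂ)) ≠ 0 := by
      simpa using sqrt_two_ne
    have hs2 : ((Real.sqrt 2 : ℂ)) * ((Real.sqrt 2 : ℂ)) = 2 := by
      rw [← Complex.ofReal_mul, Real.mul_self_sqrt (by norm_num)]; norm_num
    field_simp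
    ring_nf
    rw [show ((Real.sqrt 2 : ℂ))^2 = 2 by rw [sq]; exact hs2]

lemma gfun_eq (ζ : ℂ) : gfun ζ = (Real.sqrt (Real.pi/2) : ℂ) *
    (1 - cerf (-Complex.I * ζ / (Real.sqrt 2 : ℂ))) := by
  set D : ℂ → ℂ := fun z => gfun z - (Real.sqrt (Real.pi/2) : ℂ) *
    (1 - cerf (-Complex.I * z / (Real.sqrt 2 : ℂ))) with hD
  have hderiv : ∀ z : ℂ, HasDerivAt D 0 z := by
    intro z
    rw [hD]
    have := (gfun_hasDerivAt z).sub (hfun_hasDerivAt z); rw [sub_self] at this; exact this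
  have hdiff : Differentiable ℂ D := fun z => (hderiv z).differentiableAt
  have hconst : D ζ = D 0 := by
    apply is_const_of_fderiv_eq_zero hdiff
    intro z
    rw [(hderiv z).hasFDerivAt.fderiv]
    ext x
    simp
  have hD0 : D 0 = 0 := by
    simp [hD, gfun_zero, cerf_zero]
  have := hconst.trans hD0
  rw [hD] at this
  linear_combination this

lemma cpow_sqrt_2pi : ((Real.pi : ℂ) / (1/2)) ^ (1/2 : ℂ) = ((Real.sqrt (2*Real.pi) : ℝ) : ℂ) := by
  rw [show ((Real.pi : ℂ) / (1/2)) = (((2*Real.pi : ℝ)) : ℂ) by push_cast; ring]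
  rw [show ((1:ℂ)/2) = (((1/2 : ℝ)):ℂ) by norm_num, ← Complex.ofReal_cpow (by positivity)]
  rw [← Real.sqrt_eq_rpow]

noncomputable def fint (ζ : ℂ) (s : ℝ) (v t : ℝ) : ℂ :=
  Complex.exp (-(v:ℂ)^2/2 - (s:ℂ)*Complex.I*((v:ℂ)-ζ)*(t:ℂ))

set_option maxHeartbeats 1000000 in
lemma main_key (ζ : ℂ) (s : ℝ) (hs : s = 1 ∨ s = -1) (him : 0 < s * ζ.im) :
    (∫ v : ℝ, Complex.exp (-(v : ℂ) ^ 2 / 2) / ((v : ℂ) - ζ))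
      = (s:ℂ) * Complex.I * (Real.sqrt (2*Real.pi) : ℂ) * Complex.exp (-ζ^2/2)
        * gfun ((s:ℂ)*ζ) := by
  have hs2 : (s:ℂ)^2 = 1 := by
    rcases hs with h | h <;> simp [h]
  have hζim : ζ.im ≠ 0 := by
    intro h; rw [h, mul_zero] at him; exact lt_irrefl 0 him
  have hsub : ∀ v : ℝ, ((v:ℂ) - ζ) ≠ 0 := by
    intro v h
    have : ((v:ℂ) - ζ).im = 0 := by rw [h]; rfl
    simp only [Complex.sub_im, Complex.ofReal_im, zero_sub, neg_eq_zero] at this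
    exact hζim this
  set a : ℝ → ℂ := fun v => (s:ℂ) * Complex.I * ((v:ℂ) - ζ) with ha
  have hare : ∀ v : ℝ, (a v).re = s * ζ.im := by
    intro v
    rw [ha]
    simp only [mul_assoc, Complex.re_ofReal_mul, Complex.mul_re, Complex.I_re, Complex.I_im,
      Complex.sub_re, Complex.sub_im, Complex.ofReal_re, Complex.ofReal_im]
    ring
  have hapos : ∀ v : ℝ, 0 < (a v).re := fun v => by rw [hare]; exact him
  -- Step 1: pointwise representation
  have rep : ∀ v : ℝ, Complex.exp (-(v : ℂ) ^ 2 / 2) / ((v : ℂ) - ζ)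
      = (s:ℂ) * Complex.I *
        ∫ t in Ioi (0:ℝ), Complex.exp (-(v:ℂ)^2/2 - (s:ℂ)*Complex.I*((v:ℂ)-ζ)*(t:ℂ)) := by
    intro v
    have h1 := integral_Ioi_cexp (a v) (hapos v)
    have e : (fun t : ℝ => Complex.exp (-(v:ℂ)^2/2 - (s:ℂ)*Complex.I*((v:ℂ)-ζ)*(t:ℂ)))
        = fun t : ℝ => Complex.exp (-(v:ℂ)^2/2) * Complex.exp (-(a v * (t:ℂ))) := by
      funext t
      rw [← Complex.exp_add, ha]
      congr 1
    rw [e, integral_const_mul, h1]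
    have hsne : (s:ℂ) ≠ 0 := by
      rcases hs with h | h <;> simp [h]
    have hsi : (s:ℂ) * Complex.I ≠ 0 := mul_ne_zero hsne Complex.I_ne_zero
    have hmul : ((s:ℂ)*Complex.I) * ((s:ℂ)*Complex.I*((v:ℂ)-ζ))⁻¹ = ((v:ℂ)-ζ)⁻¹ := by
      rw [mul_inv, ← mul_assoc, mul_inv_cancel₀ hsi, one_mul]
    rw [ha, div_eq_mul_inv, ← hmul]
    ring
  -- Step 2: Fubini
  have hnormf : ∀ v t : ℝ, ‖fint ζ s v t‖ = Real.exp (-v^2/2) * Real.exp (-(s*ζ.im)*t) := by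
    intro v t
    rw [fint, Complex.norm_exp, ← Real.exp_add]
    congr 1
    have hz : (-(v:ℂ)^2/2 - (s:ℂ)*Complex.I*((v:ℂ)-ζ)*(t:ℂ))
        = Complex.ofReal (-v^2/2) - ((s*t :ℝ):ℂ)*(Complex.I*((v:ℂ)-ζ)) := by
      push_cast; ring
    rw [hz, Complex.sub_re, Complex.ofReal_re, Complex.re_ofReal_mul]
    simp only [Complex.mul_re, Complex.I_re, Complex.I_im, Complex.sub_im, Complex.sub_re,
      Complex.ofReal_im, Complex.ofReal_re]
    ring
  have hintf : Integrable (Function.uncurry (fint ζ s)) (volume.prod (volume.restrict (Ioi 0))) := by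
    have hg : Integrable (fun v : ℝ => Real.exp (-v^2/2)) := by
      have h0 := integrable_exp_neg_mul_sq (by norm_num : (0:ℝ) < 1/2)
      have e : (fun v : ℝ => Real.exp (-v^2/2)) = fun v : ℝ => Real.exp (-(1/2)*v^2) := by
        funext v; congr 1; ring
      rw [e]; exact h0
    have hh : Integrable (fun t : ℝ => Real.exp (-(s*ζ.im)*t)) (volume.restrict (Ioi 0)) :=
      exp_neg_integrableOn_Ioi 0 him
    refine (hg.mul_prod hh).mono' ?_ ?_
    · apply Continuous.aestronglyMeasurable
      simp only [Function.uncurry_def, fint]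
      fun_prop
    · filter_upwards with p
      rw [Function.uncurry_def, hnormf p.1 p.2]
  have swap := MeasureTheory.integral_integral_swap hintf
  -- Step 3: inner Gaussian integral
  have inner : ∀ t : ℝ, (∫ v : ℝ, fint ζ s v t)
      = (Real.sqrt (2*Real.pi) : ℂ) * Complex.exp ((s:ℂ)*Complex.I*ζ*(t:ℂ) - (t:ℂ)^2/2) := by
    intro t
    have hb : (-(1/2) : ℂ).re < 0 := by norm_num
    have h := integral_cexp_quadratic hb (-(s:ℂ)*Complex.I*(t:ℂ)) ((s:ℂ)*Complex.I*ζ*(t:ℂ))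
    have e : (fun v : ℝ => fint ζ s v t) = fun v : ℝ =>
        Complex.exp ((-(1/2):ℂ) * (v:ℂ)^2 + (-(s:ℂ)*Complex.I*(t:ℂ)) * (v:ℂ)
          + (s:ℂ)*Complex.I*ζ*(t:ℂ)) := by
      funext v; rw [fint]; congr 1; ring
    rw [e, h]
    rw [show ((Real.pi : ℂ) / -(-(1/2))) = ((Real.pi : ℂ) / (1/2)) by norm_num]
    rw [cpow_sqrt_2pi]
    congr 1
    have hc2 : (-(s:ℂ)*Complex.I*(t:ℂ))^2 = -(t:ℂ)^2 := by
      rw [show (-(s:ℂ)*Complex.I*(t:ℂ))^2 = (s:ℂ)^2 * Complex.I^2 * (t:ℂ)^2 by ring,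
        hs2, Complex.I_sq]
      ring
    rw [hc2]
    ring
  have e2 : ∀ t : ℝ, (∫ v : ℝ, fint ζ s v t) = ((Real.sqrt (2*Real.pi) : ℂ) * Complex.exp (-ζ^2/2))
      * Complex.exp (-((t:ℂ) - Complex.I*((s:ℂ)*ζ))^2/2) := by
    intro t
    have hsq : ((t:ℂ) - Complex.I*((s:ℂ)*ζ))^2
        = (t:ℂ)^2 - 2*(t:ℂ)*Complex.I*(s:ℂ)*ζ - (s:ℂ)^2*ζ^2 := by
      rw [show ((t:ℂ) - Complex.I*((s:ℂ)*ζ))^2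
          = (t:ℂ)^2 - 2*(t:ℂ)*Complex.I*(s:ℂ)*ζ + Complex.I^2*((s:ℂ)^2*ζ^2) by ring,
        Complex.I_sq]
      ring
    have hmerge : Complex.exp (-ζ^2/2) * Complex.exp (-((t:ℂ) - Complex.I*((s:ℂ)*ζ))^2/2)
        = Complex.exp ((s:ℂ)*Complex.I*ζ*(t:ℂ) - (t:ℂ)^2/2) := by
      rw [← Complex.exp_add]
      congr 1
      rw [hsq, hs2]
      ring
    rw [inner t,
      show ((Real.sqrt (2*Real.pi):ℂ) * Complex.exp (-ζ^2/2))
          * Complex.exp (-((t:ℂ) - Complex.I*((s:ℂ)*ζ))^2/2)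
        = (Real.sqrt (2*Real.pi):ℂ) * (Complex.exp (-ζ^2/2)
          * Complex.exp (-((t:ℂ) - Complex.I*((s:ℂ)*ζ))^2/2)) from mul_assoc _ _ _,
      hmerge]
  calc (∫ v : ℝ, Complex.exp (-(v : ℂ) ^ 2 / 2) / ((v : ℂ) - ζ))
      = ∫ v : ℝ, (s:ℂ) * Complex.I * ∫ t in Ioi (0:ℝ), fint ζ s v t := by
        simp only [fint, rep]
    _ = (s:ℂ) * Complex.I * ∫ v : ℝ, ∫ t in Ioi (0:ℝ), fint ζ s v t := integral_const_mul _ _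
    _ = (s:ℂ) * Complex.I * ∫ t in Ioi (0:ℝ), ∫ v : ℝ, fint ζ s v t := by rw [swap]
    _ = (s:ℂ) * Complex.I * ∫ t in Ioi (0:ℝ), ((Real.sqrt (2*Real.pi) : ℂ)
          * Complex.exp (-ζ^2/2)) * Complex.exp (-((t:ℂ) - Complex.I*((s:ℂ)*ζ))^2/2) := by
        congr 1
        exact integral_congr_ae (Filter.Eventually.of_forall fun t => e2 t)
    _ = (s:ℂ) * Complex.I * (((Real.sqrt (2*Real.pi) : ℂ) * Complex.exp (-ζ^2/2))
          * gfun ((s:ℂ)*ζ)) := by rw [integral_const_mul, gfun]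
    _ = (s:ℂ) * Complex.I * (Real.sqrt (2*Real.pi) : ℂ) * Complex.exp (-ζ^2/2)
          * gfun ((s:ℂ)*ζ) := by ring

/-- For `Im ζ ≠ 0`,
`(1/√(2π)) ∫_ℝ e^{-v²/2}/(v-ζ) dv = i√(π/2) e^{-ζ²/2}[sign(Im ζ) − erf(−iζ/√2)]`. -/
theorem plasmaZ_closed_form (ζ : ℂ) (hζ : ζ.im ≠ 0) :
    (Real.sqrt (2 * Real.pi) : ℂ)⁻¹ *
        (∫ v : ℝ, Complex.exp (-(v : ℂ) ^ 2 / 2) / ((v : ℂ) - ζ)) =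
    Complex.I * (Real.sqrt (Real.pi / 2) : ℂ) * Complex.exp (-ζ ^ 2 / 2) *
      ((if 0 < ζ.im then 1 else -1) - cerf (-Complex.I * ζ / (Real.sqrt 2 : ℂ))) := by
  have hsqrt_ne : ((Real.sqrt (2*Real.pi) : ℝ) : ℂ) ≠ 0 := by
    simp only [ne_eq, Complex.ofReal_eq_zero]
    positivity
  by_cases him : 0 < ζ.im
  · rw [main_key ζ 1 (Or.inl rfl) (by simpa using him)]
    rw [if_pos him]
    rw [show (((1:ℝ)):ℂ) * ζ = ζ by push_cast; ring, gfun_eq ζ]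
    push_cast
    field_simp
  · have him' : ζ.im < 0 := lt_of_le_of_ne (not_lt.mp him) hζ
    rw [main_key ζ (-1) (Or.inr rfl) (by nlinarith)]
    rw [show (((-1:ℝ)):ℂ) * ζ = -ζ by push_cast; ring, gfun_eq (-ζ)]
    have hodd : cerf (-Complex.I * -ζ / (Real.sqrt 2 : ℂ))
        = -cerf (-Complex.I * ζ / (Real.sqrt 2 : ℂ)) := by
      rw [show -Complex.I * -ζ / (Real.sqrt 2 : ℂ)
          = -(-Complex.I * ζ / (Real.sqrt 2 : ℂ)) by ring, cerf_neg]
    rw [if_neg him, hodd]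
    push_cast
    field_simp
    have h2c : ((Real.sqrt 2 : ℝ):ℂ)^2 = 2 := by
      rw [← Complex.ofReal_pow, Real.sq_sqrt (by norm_num : (0:ℝ) ≤ 2)]
      norm_num
    have hπc : ((Real.sqrt Real.pi : ℝ):ℂ)^2 = (Real.pi:ℂ) := by
      rw [← Complex.ofReal_pow, Real.sq_sqrt Real.pi_pos.le]
    have hπne : ((Real.sqrt Real.pi : ℝ):ℂ) ≠ 0 := by simpa using sqrt_pi_ne
    have h2ne : ((Real.sqrt 2 : ℝ):ℂ) ≠ 0 := by simpa using sqrt_two_ne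
    ring
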